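/- Let α be a unitary operator on a Hilbert space K, let G₁ be a group of unitaries in K such that α acts on G₁ by α(U) = χ(U)·U for scalars χ(U) ∈ U(1), and let K₁ be the closed linear span of G₁. Suppose U is a unit vector with α(U) = λ·U for a unitary λ ∈ G₁ whose eigenvalue R(λ) ∈ U(1) satisfies: R(λ)ⁿ·μ are pairwise distinct elements of the eigenvalue group H₁ for all n ≥ 0 and each μ ∈ H₁ (total ergodicity consequence). If U is not proportional to any element of G₁, then U ∉ K₁, i.e., U cannot be a (possibly infinite) linear combination of eigenvectors of α. -/

import Mathlib

/-- Let `α` be a unitary on a Hilbert space `K`, `e : H₁ → K` an orthonormal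
family of eigenvectors (`α (e μ) = χ μ • e μ`, `‖χ μ‖ = 1`) spanning the closed subspace
`K₁`.  Let `U` be a unit vector with `α U = L U`, where `L` is a unitary (multiplication
by the eigen-unitary `λ ∈ G₁`) acting on the basis by `L (e μ) = c μ • e (ρ * μ)`
(`‖c μ‖ = 1`) with eigenvalue `ρ`, intertwining `α` by `α ∘ L = χ ρ • (L ∘ α)`, and
suppose the elements `ρ ^ n * μ` are pairwise distinct for `n ≥ 0` (total ergodicity).
If `U` is not proportional to any eigenvector, then `U` does not lie in `K₁`. -/
theorem stmt6 {K : Type*} [NormedAddCommGroup K] [InnerProductSpace ℂ K] [CompleteSpace K]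
    {H₁ : Type*} [CommGroup H₁]
    (α : K ≃ₗᵢ[ℂ] K) (e : H₁ → K) (he : Orthonormal ℂ e)
    (χ : H₁ → ℂ) (hχ : ∀ μ, ‖χ μ‖ = 1)
    (heig : ∀ μ, α (e μ) = χ μ • e μ)
    (L : K ≃ₗᵢ[ℂ] K) (ρ : H₁) (c : H₁ → ℂ) (hc : ∀ μ, ‖c μ‖ = 1)
    (hL : ∀ μ, L (e μ) = c μ • e (ρ * μ))
    (hint : ∀ x : K, α (L x) = χ ρ • L (α x))
    (hdist : ∀ μ : H₁, Function.Injective fun n : ℕ => ρ ^ n * μ)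
    (U : K) (hUnorm : ‖U‖ = 1) (hU : α U = L U)
    (hnp : ∀ (b : ℂ) (μ : H₁), U ≠ b • e μ) :
    U ∉ (Submodule.span ℂ (Set.range e)).topologicalClosure := by
  intro hmem
  set a : H₁ → ℂ := fun μ => inner ℂ (e μ) U with ha
  have hχ0 : ∀ μ, χ μ ≠ 0 := fun μ h => by simpa [h] using hχ μ
  have hc0 : ∀ μ, c μ ≠ 0 := fun μ h => by simpa [h] using hc μ
  -- coefficient of α U at ν is χ ν * a ν
  have hαcoef : ∀ ν, (inner ℂ (e ν) (α U) : ℂ) = χ ν * a ν := by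
    intro ν
    have h1 : α ((χ ν)⁻¹ • e ν) = e ν := by
      rw [map_smul, heig, smul_smul, inv_mul_cancel₀ (hχ0 ν), one_smul]
    calc (inner ℂ (e ν) (α U) : ℂ) = inner ℂ (α ((χ ν)⁻¹ • e ν)) (α U) := by rw [h1]
      _ = inner ℂ ((χ ν)⁻¹ • e ν) U := α.inner_map_map _ _
      _ = χ ν * a ν := by
          rw [inner_smul_left, Complex.inv_eq_conj (hχ ν), Complex.conj_conj]
  have hLcoef : ∀ μ, (inner ℂ (e (ρ * μ)) (L U) : ℂ) = c μ * a μ := by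
    intro μ
    have h1 : L ((c μ)⁻¹ • e μ) = e (ρ * μ) := by
      rw [map_smul, hL, smul_smul, inv_mul_cancel₀ (hc0 μ), one_smul]
    calc (inner ℂ (e (ρ * μ)) (L U) : ℂ) = inner ℂ (L ((c μ)⁻¹ • e μ)) (L U) := by rw [h1]
      _ = inner ℂ ((c μ)⁻¹ • e μ) U := L.inner_map_map _ _
      _ = c μ * a μ := by
          rw [inner_smul_left, Complex.inv_eq_conj (hc μ), Complex.conj_conj]
  have key : ∀ μ, ‖a (ρ * μ)‖ = ‖a μ‖ := by
    intro μ
    have : χ (ρ * μ) * a (ρ * μ) = c μ * a μ := by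
      rw [← hαcoef, ← hLcoef, hU]
    have h := congrArg norm this
    rwa [norm_mul, norm_mul, hχ, hc, one_mul, one_mul] at h
  have keyn : ∀ (n : ℕ) μ, ‖a (ρ ^ n * μ)‖ = ‖a μ‖ := by
    intro n
    induction n with
    | zero => simp
    | succ n ih =>
        intro μ
        have : ρ ^ (n + 1) * μ = ρ ^ n * (ρ * μ) := by
          rw [pow_succ, mul_assoc]
        rw [this, ih, key]
  -- all coefficients vanish
  have hzero : ∀ μ, a μ = 0 := by
    intro μ
    have hs : Summable fun ν => ‖a ν‖ ^ 2 := he.inner_products_summable U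
    have hs2 : Summable fun n : ℕ => ‖a (ρ ^ n * μ)‖ ^ 2 :=
      hs.comp_injective (hdist μ)
    have ht := hs2.tendsto_atTop_zero
    have hconst : (fun n : ℕ => ‖a (ρ ^ n * μ)‖ ^ 2) = fun _ => ‖a μ‖ ^ 2 := by
      funext n; rw [keyn]
    rw [hconst] at ht
    have := tendsto_nhds_unique ht tendsto_const_nhds
    have : ‖a μ‖ = 0 := by
      nlinarith [norm_nonneg (a μ)]
    simpa using this
  -- U is orthogonal to the span, hence to its closure, hence U = 0
  have horth : U ∈ (Submodule.span ℂ (Set.range e))ᗮ := by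
    rw [Submodule.mem_orthogonal]
    intro v hv
    induction hv using Submodule.span_induction with
    | mem x hx => obtain ⟨μ, rfl⟩ := hx; exact hzero μ
    | zero => simp
    | add x y _ _ hx hy => rw [inner_add_left, hx, hy, add_zero]
    | smul t x _ hx => rw [inner_smul_left, hx, mul_zero]
  have horth2 : U ∈ ((Submodule.span ℂ (Set.range e)).topologicalClosure)ᗮ := by
    rw [← Submodule.orthogonal_orthogonal_eq_closure, Submodule.triorthogonal_eq_orthogonal]
    exact horth
  have : U = 0 := by
    have := Submodule.inner_left_of_mem_orthogonal hmem horth2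
    simpa using inner_self_eq_zero.mp this
  rw [this] at hUnorm
  simp at hUnorm
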